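/- Let μ_1, …, μ_N ∈ ℤ^r be a finite collection of integer vectors that spans ℝ^r, and define 𝒬 : ℝ^r → ℝ by 𝒬(x) = Σ_i 𝕢(⟨μ_i, x⟩). Then 𝒬 is a convex function on ℝ^r, and 𝒬 is nondegenerate in the sense that every sublevel set {x ∈ ℝ^r : 𝒬(x) ≤ c} is bounded. -/

import Mathlib

noncomputable def qq (x : ℝ) : ℝ :=
  x * (⌊x⌋ : ℝ) - (1 / 2) * (⌊x⌋ : ℝ) * ((⌊x⌋ : ℝ) + 1)

lemma qq_key (m : ℤ) (x : ℝ) : (m : ℝ) * x - (1/2) * m * (m + 1) ≤ qq x := by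
  unfold qq
  have h1 : ((⌊x⌋ : ℤ) : ℝ) ≤ x := Int.floor_le x
  have h2 : x < (⌊x⌋ : ℝ) + 1 := Int.lt_floor_add_one x
  rcases lt_trichotomy m ⌊x⌋ with h | h | h
  · have : (m : ℝ) + 1 ≤ (⌊x⌋ : ℝ) := by exact_mod_cast Int.add_one_le_iff.mpr h
    nlinarith [mul_nonneg (by linarith : (0:ℝ) ≤ (⌊x⌋:ℝ) - m) (by linarith : (0:ℝ) ≤ x - ⌊x⌋)]
  · subst h; nlinarith
  · have : (⌊x⌋ : ℝ) + 1 ≤ (m : ℝ) := by exact_mod_cast Int.add_one_le_iff.mpr h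
    nlinarith [mul_nonneg (by linarith : (0:ℝ) ≤ (m:ℝ) - ⌊x⌋) (by linarith : (0:ℝ) ≤ (⌊x⌋:ℝ) + 1 - x)]

lemma qq_convexOn : ConvexOn ℝ Set.univ qq := by
  refine ⟨convex_univ, fun x _ y _ a b ha hb hab => ?_⟩
  have hb' : b = 1 - a := by linarith
  set z : ℝ := a • x + b • y with hz
  have key : qq z = a * ((⌊z⌋:ℝ) * x - (1/2) * ⌊z⌋ * (⌊z⌋ + 1))
      + b * ((⌊z⌋:ℝ) * y - (1/2) * ⌊z⌋ * (⌊z⌋ + 1)) := by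
    subst hb'
    simp only [qq, hz, smul_eq_mul]
    ring
  rw [key]
  have kx : a * ((⌊z⌋:ℝ) * x - (1/2) * ⌊z⌋ * (⌊z⌋ + 1)) ≤ a * qq x :=
    mul_le_mul_of_nonneg_left (qq_key ⌊z⌋ x) ha
  have ky : b * ((⌊z⌋:ℝ) * y - (1/2) * ⌊z⌋ * (⌊z⌋ + 1)) ≤ b * qq y :=
    mul_le_mul_of_nonneg_left (qq_key ⌊z⌋ y) hb
  simpa [smul_eq_mul] using add_le_add kx ky

lemma qq_lower (x : ℝ) : x^2 / 2 - |x| ≤ qq x := by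
  unfold qq
  have h1 : ((⌊x⌋ : ℤ) : ℝ) ≤ x := Int.floor_le x
  have h2 : x < (⌊x⌋ : ℝ) + 1 := Int.lt_floor_add_one x
  rcases le_or_gt 0 x with hx | hx
  · rw [abs_of_nonneg hx]
    have hn : (0:ℤ) ≤ ⌊x⌋ := Int.floor_nonneg.mpr hx
    have hn' : (0:ℝ) ≤ (⌊x⌋:ℝ) := by exact_mod_cast hn
    rcases eq_or_lt_of_le hn with h | h
    · have : (⌊x⌋:ℝ) = 0 := by exact_mod_cast h.symm
      rw [this]; nlinarith
    · have : (1:ℝ) ≤ (⌊x⌋:ℝ) := by exact_mod_cast h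
      nlinarith [mul_nonneg (by linarith : (0:ℝ) ≤ x - ⌊x⌋) (by linarith : (0:ℝ) ≤ (⌊x⌋:ℝ) + 1 - x)]
  · rw [abs_of_neg hx]
    have hn : ⌊x⌋ ≤ -1 := by
      have : ⌊x⌋ < 0 := Int.floor_lt.mpr (by simpa using hx)
      omega
    have hn' : (⌊x⌋:ℝ) ≤ -1 := by exact_mod_cast hn
    nlinarith [mul_nonneg (by linarith : (0:ℝ) ≤ x - ⌊x⌋) (by linarith : (0:ℝ) ≤ (⌊x⌋:ℝ) + 1 - x)]

lemma qq_lower' (x : ℝ) : x^2 / 4 - 1 ≤ qq x := by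
  have := qq_lower x
  have h : x^2 / 4 - 1 ≤ x^2 / 2 - |x| := by
    nlinarith [sq_nonneg (|x| - 2), sq_abs x]
  linarith

theorem Q_convex_nondegenerate (r N : ℕ) (μ : Fin N → Fin r → ℤ)
    (hspan : Submodule.span ℝ
      (Set.range fun i => fun j => ((μ i j : ℝ))) = (⊤ : Submodule ℝ (Fin r → ℝ))) :
    ConvexOn ℝ Set.univ (fun x : Fin r → ℝ => ∑ i, qq (∑ j, (μ i j : ℝ) * x j)) ∧
    ∀ c : ℝ, Bornology.IsBounded
      {x : Fin r → ℝ | (∑ i, qq (∑ j, (μ i j : ℝ) * x j)) ≤ c} := by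
  constructor
  · refine ⟨convex_univ, fun x _ y _ a b ha hb hab => ?_⟩
    have step : ∀ i : Fin N,
        qq (∑ j, (μ i j : ℝ) * (a • x + b • y) j)
          ≤ a * qq (∑ j, (μ i j : ℝ) * x j) + b * qq (∑ j, (μ i j : ℝ) * y j) := by
      intro i
      have hlin : (∑ j, (μ i j : ℝ) * (a • x + b • y) j)
          = a • (∑ j, (μ i j : ℝ) * x j) + b • (∑ j, (μ i j : ℝ) * y j) := by
        simp only [Pi.add_apply, Pi.smul_apply, smul_eq_mul, mul_add,
          Finset.sum_add_distrib, Finset.mul_sum]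
        congr 1 <;> exact Finset.sum_congr rfl fun j _ => by ring
      rw [hlin]
      simpa [smul_eq_mul] using
        qq_convexOn.2 (Set.mem_univ _) (Set.mem_univ _) ha hb hab
    calc (∑ i, qq (∑ j, (μ i j : ℝ) * (a • x + b • y) j))
        ≤ ∑ i, (a * qq (∑ j, (μ i j : ℝ) * x j) + b * qq (∑ j, (μ i j : ℝ) * y j)) :=
          Finset.sum_le_sum fun i _ => step i
      _ = a • (∑ i, qq (∑ j, (μ i j : ℝ) * x j)) + b • (∑ i, qq (∑ j, (μ i j : ℝ) * y j)) := by
          simp [Finset.sum_add_distrib, Finset.mul_sum, smul_eq_mul]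
  · intro c
    -- the linear map A
    set M : Matrix (Fin N) (Fin r) ℝ := fun i j => (μ i j : ℝ) with hM
    set A : (Fin r → ℝ) →ₗ[ℝ] (Fin N → ℝ) := M.mulVecLin with hA
    have hAapp : ∀ x i, A x i = ∑ j, (μ i j : ℝ) * x j := by
      intro x i
      rw [hA, Matrix.mulVecLin_apply]
      simp [hA, hM, Matrix.mulVecLin_apply, Matrix.mulVec, dotProduct]
    have hinj : LinearMap.ker A = ⊥ := by
      rw [LinearMap.ker_eq_bot']
      intro x hx
      have hx' : ∀ i, ∑ j, (μ i j : ℝ) * x j = 0 := by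
        intro i; rw [← hAapp x i, hx]; rfl
      let φ : (Fin r → ℝ) →ₗ[ℝ] ℝ :=
        { toFun := fun y => ∑ j, y j * x j
          map_add' := by intro u v; simp [add_mul, Finset.sum_add_distrib]
          map_smul' := by intro a u; simp [Finset.mul_sum, mul_assoc] }
      have hsub : Set.range (fun i => fun j => ((μ i j : ℝ))) ⊆ (LinearMap.ker φ : Set _) := by
        rintro _ ⟨i, rfl⟩
        simpa [φ] using hx' i
      have htop : Submodule.span ℝ (Set.range fun i => fun j => ((μ i j : ℝ)))
          ≤ LinearMap.ker φ := Submodule.span_le.mpr hsub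
      rw [hspan] at htop
      have hφx : φ x = 0 := htop (Submodule.mem_top)
      have hsum : ∑ j, x j * x j = 0 := hφx
      funext j
      have := (Finset.sum_eq_zero_iff_of_nonneg
        (fun j _ => mul_self_nonneg (x j))).mp hsum j (Finset.mem_univ j)
      exact mul_self_eq_zero.mp this
    obtain ⟨g, hg⟩ := A.exists_leftInverse_of_injective hinj
    let B := LinearMap.toContinuousLinearMap g
    set K := Real.sqrt (4 * (c + N)) with hK
    have hK0 : 0 ≤ K := Real.sqrt_nonneg _
    have hsub : {x : Fin r → ℝ | (∑ i, qq (∑ j, (μ i j : ℝ) * x j)) ≤ c}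
        ⊆ Metric.closedBall 0 (‖B‖ * K) := by
      intro x hx
      simp only [Set.mem_setOf_eq] at hx
      -- bound on each coordinate of A x
      have hsumsq : ∑ i, (A x i)^2 ≤ 4 * (c + N) := by
        have h1 : ∑ i, ((A x i)^2 / 4 - 1) ≤ c := by
          calc ∑ i, ((A x i)^2 / 4 - 1) ≤ ∑ i, qq (A x i) :=
                Finset.sum_le_sum fun i _ => qq_lower' (A x i)
            _ = ∑ i, qq (∑ j, (μ i j : ℝ) * x j) := by
                refine Finset.sum_congr rfl fun i _ => by rw [hAapp]
            _ ≤ c := hx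
        have h2 : ∑ i, ((A x i)^2 / 4 - 1) = (∑ i, (A x i)^2) / 4 - N := by
          simp [Finset.sum_sub_distrib, Finset.sum_div]
        rw [h2] at h1
        linarith
      have hAx : ‖A x‖ ≤ K := by
        rw [pi_norm_le_iff_of_nonneg hK0]
        intro i
        rw [Real.norm_eq_abs, hK, ← Real.sqrt_sq_eq_abs]
        apply Real.sqrt_le_sqrt
        calc (A x i)^2 ≤ ∑ i', (A x i')^2 :=
              Finset.single_le_sum (f := fun i' => (A x i')^2) (fun i' _ => sq_nonneg _) (Finset.mem_univ i)
          _ ≤ 4 * (c + N) := hsumsq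
      have hxB : x = B (A x) := by
        have := congrArg (fun f => f x) hg
        simpa [LinearMap.comp_apply, B, LinearMap.coe_toContinuousLinearMap'] using this.symm
      rw [Metric.mem_closedBall, dist_zero_right]
      calc ‖x‖ = ‖B (A x)‖ := by rw [← hxB]
        _ ≤ ‖B‖ * ‖A x‖ := B.le_opNorm _
        _ ≤ ‖B‖ * K := mul_le_mul_of_nonneg_left hAx (norm_nonneg _)
    exact Metric.isBounded_closedBall.subset hsub
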